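/- arXiv:1804.08507 — 8 statements merged into one kernel-verified Lean document; each statement's English description precedes it below -/
import Mathlib

section
/- Let A : X → X, B : U → X, C : X → Y, D : U → Y be bounded linear operators between Hilbert spaces such that the block operator matrix M = [[A,B],[C,D]] : X ⊕ U → X ⊕ Y is a contraction. Then for every z in the open unit disk of ℂ, the operator I - zA is boundedly invertible and the transfer function F(z) = D + z C (I - zA)⁻¹ B satisfies ‖F(z)‖ ≤ 1. -/
/-- If the block operator `M = [[A,B],[C,D]] : X ⊕ U → X ⊕ Y` is a contraction
(expressed spatially: `‖Ax+Bu‖² + ‖Cx+Du‖² ≤ ‖x‖² + ‖u‖²`), then for every `z`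
in the open unit disk `I - zA` is boundedly invertible and the transfer function
`F(z) = D + zC(I - zA)⁻¹B` satisfies `‖F(z)‖ ≤ 1`, i.e. `‖F(z)u‖ ≤ ‖u‖` for all `u`. -/
theorem stmt0
    {X U Y : Type*}
    [NormedAddCommGroup X] [InnerProductSpace ℂ X] [CompleteSpace X]
    [NormedAddCommGroup U] [InnerProductSpace ℂ U] [CompleteSpace U]
    [NormedAddCommGroup Y] [InnerProductSpace ℂ Y] [CompleteSpace Y]
    (A : X →L[ℂ] X) (B : U →L[ℂ] X) (C : X →L[ℂ] Y) (D : U →L[ℂ] Y)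
    (hM : ∀ (x : X) (u : U), ‖A x + B u‖ ^ 2 + ‖C x + D u‖ ^ 2 ≤ ‖x‖ ^ 2 + ‖u‖ ^ 2)
    (z : ℂ) (hz : ‖z‖ < 1) :
    ∃ G : X →L[ℂ] X,
      (1 - z • A) ∘L G = 1 ∧ G ∘L (1 - z • A) = 1 ∧
      ∀ u : U, ‖D u + z • C (G (B u))‖ ≤ ‖u‖ := by
  -- ‖A‖ ≤ 1
  have hA : ‖A‖ ≤ 1 := by
    refine A.opNorm_le_bound zero_le_one fun x => ?_
    have h := hM x 0
    simp only [map_zero, add_zero, norm_zero] at h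
    have h2 : ‖A x‖ ^ 2 ≤ ‖x‖ ^ 2 := by nlinarith [sq_nonneg ‖C x‖]
    have := (pow_le_pow_iff_left₀ (norm_nonneg _) (norm_nonneg _) two_ne_zero).mp h2
    linarith
  have hzA : ‖z • A‖ < 1 := by
    calc ‖z • A‖ = ‖z‖ * ‖A‖ := norm_smul z A
    _ ≤ ‖z‖ * 1 := by nlinarith [norm_nonneg z]
    _ < 1 := by linarith
  set t : Units (X →L[ℂ] X) := Units.oneSub (z • A) hzA with ht
  refine ⟨↑t⁻¹, ?_, ?_, ?_⟩
  · exact t.mul_inv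
  · exact t.inv_mul
  · intro u
    set w : X := (↑t⁻¹ : X →L[ℂ] X) (B u) with hw
    have hw' : w = z • A w + B u := by
      have h2 : (↑t : X →L[ℂ] X) w = B u := by
        show ((↑t * ↑t⁻¹ : X →L[ℂ] X)) (B u) = B u
        rw [t.mul_inv]; rfl
      have h3 : (↑t : X →L[ℂ] X) w = w - z • A w := by
        simp [ht, Units.oneSub, ContinuousLinearMap.sub_apply,
          ContinuousLinearMap.smul_apply]
      rw [h3] at h2
      rw [← h2]; abel
    -- Apply contraction to x = z • w
    have key := hM (z • w) u
    have hAx : A (z • w) + B u = w := by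
      rw [map_smul, ← hw']
    have hCx : C (z • w) + D u = D u + z • C w := by
      rw [map_smul]; abel
    rw [hAx, hCx] at key
    have hnx : ‖z • w‖ ^ 2 = ‖z‖ ^ 2 * ‖w‖ ^ 2 := by
      rw [norm_smul]; ring
    have hz1 : ‖z‖ ^ 2 ≤ 1 := by nlinarith [norm_nonneg z]
    have hz2 : ‖z‖ ^ 2 * ‖w‖ ^ 2 ≤ ‖w‖ ^ 2 := by nlinarith [sq_nonneg ‖w‖]
    have h2 : ‖D u + z • C w‖ ^ 2 ≤ ‖u‖ ^ 2 := by
      rw [hnx] at key; linarith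
    have := (pow_le_pow_iff_left₀ (norm_nonneg _) (norm_nonneg _) two_ne_zero).mp h2
    simpa [hw] using this
end

section
/- Let M = [[A,B],[C,D]] be a contractive block operator on X ⊕ U into X ⊕ Y. For every z in the open unit disk and every u ∈ U, setting x' = (I - zA)⁻¹ B u and x = z x', one has ‖x'‖² + ‖D u + C x‖² ≤ ‖x‖² + ‖u‖², and consequently ‖F(z)u‖² ≤ ‖u‖² where F(z) = D + zC(I - zA)⁻¹B. -/
/-- Feedback-system inequality: if the block operator `[[A,B],[C,D]]` is a contraction
(spatially), `|z| < 1`, `G` is the bounded inverse of `I - zA`, `x' = G(Bu)` and `x = z x'`,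
then `‖x'‖² + ‖Du + Cx‖² ≤ ‖x‖² + ‖u‖²`, and consequently `‖F(z)u‖² ≤ ‖u‖²` where
`F(z)u = Du + zC x'`. -/
theorem stmt1
    {X U Y : Type*}
    [NormedAddCommGroup X] [InnerProductSpace ℂ X] [CompleteSpace X]
    [NormedAddCommGroup U] [InnerProductSpace ℂ U] [CompleteSpace U]
    [NormedAddCommGroup Y] [InnerProductSpace ℂ Y] [CompleteSpace Y]
    (A : X →L[ℂ] X) (B : U →L[ℂ] X) (C : X →L[ℂ] Y) (D : U →L[ℂ] Y)
    (hM : ∀ (x : X) (u : U), ‖A x + B u‖ ^ 2 + ‖C x + D u‖ ^ 2 ≤ ‖x‖ ^ 2 + ‖u‖ ^ 2)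
    (z : ℂ) (hz : ‖z‖ < 1)
    (G : X →L[ℂ] X) (hG₁ : (1 - z • A) ∘L G = 1) (hG₂ : G ∘L (1 - z • A) = 1)
    (u : U) (x' x : X) (hx' : x' = G (B u)) (hx : x = z • x') :
    (‖x'‖ ^ 2 + ‖D u + C x‖ ^ 2 ≤ ‖x‖ ^ 2 + ‖u‖ ^ 2) ∧
      ‖D u + z • C x'‖ ^ 2 ≤ ‖u‖ ^ 2 := by
  -- From hG₁ : (1 - z•A) (G (B u)) = B u, i.e. x' - z • A x' = B u.
  have hBu : B u = x' - A x := by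
    have := congrArg (fun T : X →L[ℂ] X => T (B u)) hG₁
    simp only [ContinuousLinearMap.comp_apply, ContinuousLinearMap.sub_apply,
      ContinuousLinearMap.one_apply, ContinuousLinearMap.smul_apply] at this
    rw [hx', hx, hx', map_smul]
    exact this.symm
  have key : ‖x'‖ ^ 2 + ‖C x + D u‖ ^ 2 ≤ ‖x‖ ^ 2 + ‖u‖ ^ 2 := by
    have := hM x u
    rwa [hBu, add_sub_cancel] at this
  have h1 : ‖x'‖ ^ 2 + ‖D u + C x‖ ^ 2 ≤ ‖x‖ ^ 2 + ‖u‖ ^ 2 := by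
    rwa [add_comm (D u)]
  refine ⟨h1, ?_⟩
  have hCx : C x = z • C x' := by rw [hx, map_smul]
  have hxn : ‖x‖ ^ 2 ≤ ‖x'‖ ^ 2 := by
    rw [hx, norm_smul, mul_pow]
    have hz2 : ‖z‖ ^ 2 ≤ 1 := by nlinarith [norm_nonneg z]
    nlinarith [sq_nonneg ‖x'‖]
  rw [← hCx]
  linarith
end

section
/- Let A : X → X be a bounded operator on a Hilbert space and H a bounded, strictly positive-definite (i.e., H ≥ δI for some δ > 0, selfadjoint and invertible) operator with A* H A ≤ H. Then the spectral radius of A is at most 1. -/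
open scoped NNReal ENNReal


/-- If `H` is a bounded, strictly positive-definite operator (selfadjoint with
`⟨Hx,x⟩ ≥ δ‖x‖²` for some `δ > 0`) satisfying `A*HA ≤ H`
(spatially: `⟨H(Ax), Ax⟩ ≤ ⟨Hx, x⟩` for all `x`), then the spectral radius of `A`
is at most `1`. -/
theorem stmt2
    {X : Type*} [NormedAddCommGroup X] [InnerProductSpace ℂ X] [CompleteSpace X]
    (A H : X →L[ℂ] X) (hH : IsSelfAdjoint H)
    (δ : ℝ) (hδ : 0 < δ)
    (hpos : ∀ x : X, δ * ‖x‖ ^ 2 ≤ (inner ℂ (H x) x : ℂ).re)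
    (hKYP : ∀ x : X, (inner ℂ (H (A x)) (A x) : ℂ).re ≤ (inner ℂ (H x) x : ℂ).re) :
    spectralRadius ℂ A ≤ 1 := by
  -- Step 1: uniform bound on ‖A^n x‖
  have hiter : ∀ (n : ℕ) (x : X),
      (inner ℂ (H ((A ^ n) x)) ((A ^ n) x) : ℂ).re ≤ (inner ℂ (H x) x : ℂ).re := by
    intro n x
    induction n with
    | zero => simp
    | succ n ih =>
        calc (inner ℂ (H ((A ^ (n+1)) x)) ((A ^ (n+1)) x) : ℂ).re
            = (inner ℂ (H (A ((A ^ n) x))) (A ((A ^ n) x)) : ℂ).re := by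
              rw [pow_succ']
              rfl
          _ ≤ (inner ℂ (H ((A ^ n) x)) ((A ^ n) x) : ℂ).re := hKYP _
          _ ≤ _ := ih
  set C : ℝ := Real.sqrt (‖H‖ / δ) + 1 with hC
  have hCpos : 0 < C := by positivity
  have hCnn : 0 ≤ C := hCpos.le
  have hbound : ∀ n : ℕ, ‖A ^ n‖ ≤ C := by
    intro n
    apply ContinuousLinearMap.opNorm_le_bound _ hCnn
    intro x
    have h1 : δ * ‖(A ^ n) x‖ ^ 2 ≤ ‖H‖ * ‖x‖ ^ 2 := by
      calc δ * ‖(A ^ n) x‖ ^ 2 ≤ (inner ℂ (H ((A ^ n) x)) ((A ^ n) x) : ℂ).re := hpos _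
        _ ≤ (inner ℂ (H x) x : ℂ).re := hiter n x
        _ ≤ ‖(inner ℂ (H x) x : ℂ)‖ := Complex.re_le_norm _
        _ ≤ ‖H x‖ * ‖x‖ := norm_inner_le_norm _ _
        _ ≤ ‖H‖ * ‖x‖ * ‖x‖ := by
            gcongr
            exact H.le_opNorm x
        _ = ‖H‖ * ‖x‖ ^ 2 := by ring
    have h2 : ‖(A ^ n) x‖ ^ 2 ≤ (C * ‖x‖) ^ 2 := by
      have hs : Real.sqrt (‖H‖ / δ) ^ 2 = ‖H‖ / δ := Real.sq_sqrt (by positivity)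
      have h3 : ‖(A ^ n) x‖ ^ 2 ≤ (Real.sqrt (‖H‖ / δ) * ‖x‖) ^ 2 := by
        rw [mul_pow, hs, div_mul_eq_mul_div, le_div_iff₀ hδ, mul_comm]
        exact h1
      have h4 : (Real.sqrt (‖H‖ / δ) * ‖x‖) ^ 2 ≤ (C * ‖x‖) ^ 2 := by
        have : Real.sqrt (‖H‖ / δ) ≤ C := by rw [hC]; linarith
        gcongr
      exact h3.trans h4
    have := Real.sqrt_le_sqrt h2
    rwa [Real.sqrt_sq (norm_nonneg _), Real.sqrt_sq (by positivity)] at this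
  -- Step 2: Gelfand formula
  have hG := spectrum.pow_nnnorm_pow_one_div_tendsto_nhds_spectralRadius A
  set C' : ℝ≥0 := ⟨C, hCnn⟩ with hC'
  have hCreal : Filter.Tendsto (fun n : ℕ => C ^ ((1 : ℝ) / n)) Filter.atTop (nhds 1) := by
    have := Filter.Tendsto.rpow (tendsto_const_nhds : Filter.Tendsto (fun _ : ℕ => C) Filter.atTop (nhds C))
      (tendsto_one_div_atTop_nhds_zero_nat) (Or.inl (ne_of_gt hCpos))
    simpa using this
  have hC'tend : Filter.Tendsto (fun n : ℕ => ((C' ^ ((1:ℝ) / n) : ℝ≥0) : ℝ≥0∞)) Filter.atTop (nhds 1) := by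
    rw [show (1 : ℝ≥0∞) = ((1 : ℝ≥0) : ℝ≥0∞) by simp]
    rw [ENNReal.tendsto_coe]
    rw [← NNReal.tendsto_coe]
    convert hCreal using 2 with n
    · rw [NNReal.coe_rpow]
      rfl
    · simp
  refine le_of_tendsto_of_tendsto' hG hC'tend ?_
  intro n
  have h1 : (‖A ^ n‖₊ : ℝ≥0∞) ≤ (C' : ℝ≥0∞) := by
    rw [ENNReal.coe_le_coe]
    exact hbound n
  calc (‖A ^ n‖₊ : ℝ≥0∞) ^ ((1:ℝ)/n) ≤ (C' : ℝ≥0∞) ^ ((1:ℝ)/n) :=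
        ENNReal.rpow_le_rpow h1 (by positivity)
    _ = ((C' ^ ((1:ℝ)/n) : ℝ≥0) : ℝ≥0∞) := by
        rw [ENNReal.coe_rpow_of_nonneg _ (by positivity)]
end

section
/- Suppose the block operator [[A, B],[C, D]] : X ⊕ U → X ⊕ Y is a contraction. Then A* A + C* C ≤ I_X, and the observability operator W_o = col_{i≥0}[C Aⁱ] : X → ℓ²(ℕ, Y) is a well-defined contraction, i.e., Σ_{i=0}^{∞} ‖C Aⁱ x‖² ≤ ‖x‖² for all x ∈ X. -/
/-- If the block operator `[[A,B],[C,D]]` is a contraction (spatially), then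
`A*A + C*C ≤ I` (spatially `‖Ax‖² + ‖Cx‖² ≤ ‖x‖²`) and the observability operator
`W_o = col_{i≥0}[CAⁱ]` is a well-defined contraction from `X` to `ℓ²(ℕ,Y)`:
`Σᵢ ‖CAⁱx‖² ≤ ‖x‖²` for all `x`. -/
theorem stmt12
    {X U Y : Type*}
    [NormedAddCommGroup X] [InnerProductSpace ℂ X] [CompleteSpace X]
    [NormedAddCommGroup U] [InnerProductSpace ℂ U] [CompleteSpace U]
    [NormedAddCommGroup Y] [InnerProductSpace ℂ Y] [CompleteSpace Y]
    (A : X →L[ℂ] X) (B : U →L[ℂ] X) (C : X →L[ℂ] Y) (D : U →L[ℂ] Y)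
    (hM : ∀ (x : X) (u : U), ‖A x + B u‖ ^ 2 + ‖C x + D u‖ ^ 2 ≤ ‖x‖ ^ 2 + ‖u‖ ^ 2) :
    (∀ x : X, ‖A x‖ ^ 2 + ‖C x‖ ^ 2 ≤ ‖x‖ ^ 2) ∧
    (∀ x : X, ∃ s : ℝ, HasSum (fun i : ℕ => ‖C ((A ^ i) x)‖ ^ 2) s ∧ s ≤ ‖x‖ ^ 2) := by
  have h1 : ∀ x : X, ‖A x‖ ^ 2 + ‖C x‖ ^ 2 ≤ ‖x‖ ^ 2 := by
    intro x
    have := hM x 0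
    simpa using this
  refine ⟨h1, fun x => ?_⟩
  set f : ℕ → ℝ := fun i => ‖C ((A ^ i) x)‖ ^ 2 with hf
  have hnonneg : ∀ i, 0 ≤ f i := fun i => sq_nonneg _
  have key : ∀ n : ℕ, (∑ i ∈ Finset.range n, f i) + ‖(A ^ n) x‖ ^ 2 ≤ ‖x‖ ^ 2 := by
    intro n
    induction n with
    | zero => simp
    | succ n ih =>
      rw [Finset.sum_range_succ]
      have h2 := h1 ((A ^ n) x)
      have hA : (A ^ (n + 1)) x = A ((A ^ n) x) := by
        rw [pow_succ']; rfl
      rw [hA]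
      have hfn : f n = ‖C ((A ^ n) x)‖ ^ 2 := rfl
      linarith
  have hbound : ∀ n : ℕ, (∑ i ∈ Finset.range n, f i) ≤ ‖x‖ ^ 2 := by
    intro n
    have := key n
    nlinarith [sq_nonneg ‖(A ^ n) x‖]
  have hsummable : Summable f := summable_of_sum_range_le hnonneg hbound
  exact ⟨∑' i, f i, hsummable.hasSum, Summable.tsum_le_of_sum_range_le hsummable hbound⟩
end

section
/- Let S : ℓ²(ℕ) → ℓ²(ℕ) be the unilateral forward shift, A = S, and B : ℂ → ℓ²(ℕ) the injection onto the first coordinate. Then the adjoint controllability operator W_c* (defined via x ↦ (B* A*^{(-n-1)} x)_{n ≤ -1}) is the identity operator of ℓ²(ℕ) (up to the canonical identification of ℓ²(ℤ₋, ℂ) with ℓ²(ℕ)), hence W_c is bounded and surjective, yet the reachability space span{Im Aᵏ B : k ≥ 0} equals the finitely supported sequences, which is a proper dense subspace of ℓ²(ℕ). Thus (A,B) is ℓ²-exactly controllable but not exactly controllable. -/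
open ContinuousLinearMap


local notation "H2" => lp (fun _ : ℕ => ℂ) 2

private lemma aux_apply_eq_inner (f : lp (fun _ : ℕ => ℂ) 2) (n : ℕ) :
    f n = @inner ℂ _ _ (lp.single 2 n (1:ℂ)) f := by
  rw [lp.inner_single_left]
  simp [RCLike.inner_apply]

private lemma aux_B_single {B : ℂ →L[ℂ] lp (fun _ : ℕ => ℂ) 2}
    (hB : ∀ c : ℂ, B c 0 = c ∧ ∀ n : ℕ, B c (n + 1) = 0) (c : ℂ) :
    B c = lp.single 2 0 c := by
  apply lp.ext
  funext j
  cases j with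
  | zero => simp [(hB c).1, lp.single_apply_self]
  | succ m => simp [(hB c).2 m, lp.single_apply_ne (E := fun _ : ℕ => ℂ) 2 0 c (by omega : m + 1 ≠ 0)]

private lemma aux_S_single {S : lp (fun _ : ℕ => ℂ) 2 →L[ℂ] lp (fun _ : ℕ => ℂ) 2}
    (hS : ∀ x : lp (fun _ : ℕ => ℂ) 2, S x 0 = 0 ∧ ∀ n : ℕ, S x (n + 1) = x n)
    (k : ℕ) (c : ℂ) : S (lp.single 2 k c) = lp.single 2 (k + 1) c := by
  apply lp.ext
  funext j
  cases j with
  | zero => simp [(hS _).1, lp.single_apply_ne (E := fun _ : ℕ => ℂ) 2 (k+1) c (by omega : 0 ≠ k + 1)]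
  | succ m =>
      rw [(hS _).2 m, lp.single_apply, lp.single_apply]
      by_cases h : m = k
      · subst h; simp
      · rw [Pi.single_eq_of_ne h, Pi.single_eq_of_ne (by omega : m + 1 ≠ k + 1)]

private lemma aux_pow_single {S : lp (fun _ : ℕ => ℂ) 2 →L[ℂ] lp (fun _ : ℕ => ℂ) 2}
    (hS : ∀ x : lp (fun _ : ℕ => ℂ) 2, S x 0 = 0 ∧ ∀ n : ℕ, S x (n + 1) = x n)
    {B : ℂ →L[ℂ] lp (fun _ : ℕ => ℂ) 2}
    (hB : ∀ c : ℂ, B c 0 = c ∧ ∀ n : ℕ, B c (n + 1) = 0)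
    (k : ℕ) (c : ℂ) : (S ^ k) (B c) = lp.single 2 k c := by
  induction k with
  | zero => simpa using aux_B_single hB c
  | succ n ih =>
      rw [pow_succ', ContinuousLinearMap.mul_apply, ih, aux_S_single hS]

private lemma aux_adjB {B : ℂ →L[ℂ] lp (fun _ : ℕ => ℂ) 2}
    (hB : ∀ c : ℂ, B c 0 = c ∧ ∀ n : ℕ, B c (n + 1) = 0)
    (y : lp (fun _ : ℕ => ℂ) 2) : adjoint B y = y 0 := by
  have h1 : adjoint B y = @inner ℂ _ _ (1 : ℂ) (adjoint B y) := by
    simp [RCLike.inner_apply]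
  rw [h1, adjoint_inner_right, aux_B_single hB, ← aux_apply_eq_inner]

private lemma aux_adjS {S : lp (fun _ : ℕ => ℂ) 2 →L[ℂ] lp (fun _ : ℕ => ℂ) 2}
    (hS : ∀ x : lp (fun _ : ℕ => ℂ) 2, S x 0 = 0 ∧ ∀ n : ℕ, S x (n + 1) = x n)
    (y : lp (fun _ : ℕ => ℂ) 2) (n : ℕ) : adjoint S y n = y (n + 1) := by
  rw [aux_apply_eq_inner, adjoint_inner_right, aux_S_single hS, ← aux_apply_eq_inner]

private lemma aux_adjS_pow {S : lp (fun _ : ℕ => ℂ) 2 →L[ℂ] lp (fun _ : ℕ => ℂ) 2}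
    (hS : ∀ x : lp (fun _ : ℕ => ℂ) 2, S x 0 = 0 ∧ ∀ n : ℕ, S x (n + 1) = x n)
    (n : ℕ) (x : lp (fun _ : ℕ => ℂ) 2) (m : ℕ) :
    ((adjoint S ^ n) x) m = x (m + n) := by
  induction n generalizing x m with
  | zero => simp
  | succ k ih =>
      rw [pow_succ, ContinuousLinearMap.mul_apply, ih, aux_adjS hS]; rfl


private noncomputable def finSuppSub : Submodule ℂ (lp (fun _ : ℕ => ℂ) 2) where
  carrier := {f | (Function.support fun n : ℕ => f n).Finite}
  add_mem' := by
    intro f g hf hg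
    refine ((hf.union hg).subset ?_)
    intro n hn
    simp only [Function.mem_support, lp.coeFn_add, Pi.add_apply] at hn
    by_contra h
    simp only [Set.mem_union, Function.mem_support, not_or, not_not] at h
    exact hn (by rw [h.1, h.2, add_zero])
  zero_mem' := by simp [Function.support, lp.coeFn_zero]
  smul_mem' := by
    intro c f hf
    refine hf.subset ?_
    intro n hn
    simp only [Function.mem_support, lp.coeFn_smul, Pi.smul_apply, smul_eq_mul] at hn
    simp only [Function.mem_support]
    intro h
    exact hn (by rw [h, mul_zero])

private lemma aux_sum_single (f : lp (fun _ : ℕ => ℂ) 2)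
    (hf : (Function.support fun n : ℕ => f n).Finite) :
    f = ∑ n ∈ hf.toFinset, lp.single 2 n (f n) := by
  apply lp.ext
  funext m
  rw [lp.coeFn_sum]
  simp only [Finset.sum_apply, lp.single_apply, Finset.sum_dite_eq, Finset.sum_dite_eq']
  by_cases h : m ∈ hf.toFinset
  · simp [h]
  · simp only [Pi.single_apply, Finset.sum_ite_eq, Finset.sum_ite_eq', h, if_false]
    rw [Set.Finite.mem_toFinset, Function.mem_support, not_not] at h
    exact h

private lemma aux_mem : Memℓp (fun n : ℕ => ((1:ℂ)/2) ^ n) 2 := by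
  apply memℓp_gen
  have key : ∀ n : ℕ, ‖((1:ℂ)/2) ^ n‖ ^ ENNReal.toReal 2 = ((1:ℝ)/4) ^ n := by
    intro n
    have h2 : ENNReal.toReal 2 = ((2:ℕ):ℝ) := by norm_num
    rw [h2, Real.rpow_natCast, norm_pow]
    have : ‖(1:ℂ)/2‖ = 1/2 := by norm_num
    rw [this, ← pow_mul, mul_comm, pow_mul]
    norm_num
  exact (summable_geometric_of_lt_one (by norm_num : (0:ℝ) ≤ 1/4)
    (by norm_num : (1:ℝ)/4 < 1)).congr fun n => (key n).symm


/-- For the unilateral forward shift `A = S` on `ℓ²(ℕ)` and `B : ℂ → ℓ²(ℕ)` the injection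
onto the first coordinate, the adjoint controllability operator
`W_c* : x ↦ (B* A*^{-n-1} x)_{n≤-1}` is (under the identification `ℤ₋ ≅ ℕ`, `j ↦ -j-1`)
the identity of `ℓ²(ℕ)`; hence `W_c` is bounded and surjective (so `(A,B)` is ℓ²-exactly
controllable), yet the reachability space `span{Im AᵏB : k ≥ 0}` equals the set of finitely
supported sequences, a dense proper subspace of `ℓ²(ℕ)` (so `(A,B)` is not exactly
controllable). -/
theorem stmt13
    (S : lp (fun _ : ℕ => ℂ) 2 →L[ℂ] lp (fun _ : ℕ => ℂ) 2)
    (hS : ∀ x : lp (fun _ : ℕ => ℂ) 2, S x 0 = 0 ∧ ∀ n : ℕ, S x (n + 1) = x n)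
    (B : ℂ →L[ℂ] lp (fun _ : ℕ => ℂ) 2)
    (hB : ∀ c : ℂ, B c 0 = c ∧ ∀ n : ℕ, B c (n + 1) = 0) :
    (∀ (x : lp (fun _ : ℕ => ℂ) 2) (n : ℕ), (adjoint B) (((adjoint S) ^ n) x) = x n) ∧
    ((Submodule.span ℂ {v : lp (fun _ : ℕ => ℂ) 2 | ∃ (k : ℕ) (c : ℂ), v = (S ^ k) (B c)} :
        Set (lp (fun _ : ℕ => ℂ) 2)) =
      {f : lp (fun _ : ℕ => ℂ) 2 | (Function.support fun n : ℕ => f n).Finite}) ∧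
    Dense (Submodule.span ℂ
      {v : lp (fun _ : ℕ => ℂ) 2 | ∃ (k : ℕ) (c : ℂ), v = (S ^ k) (B c)} :
        Set (lp (fun _ : ℕ => ℂ) 2)) ∧
    (Submodule.span ℂ {v : lp (fun _ : ℕ => ℂ) 2 | ∃ (k : ℕ) (c : ℂ), v = (S ^ k) (B c)} :
        Set (lp (fun _ : ℕ => ℂ) 2)) ≠ Set.univ := by
  have hgen : ∀ (k : ℕ) (c : ℂ),
      lp.single 2 k c ∈ {v : lp (fun _ : ℕ => ℂ) 2 | ∃ (k : ℕ) (c : ℂ), v = (S ^ k) (B c)} :=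
    fun k c => ⟨k, c, (aux_pow_single hS hB k c).symm⟩
  have hspan : Submodule.span ℂ
      {v : lp (fun _ : ℕ => ℂ) 2 | ∃ (k : ℕ) (c : ℂ), v = (S ^ k) (B c)} = finSuppSub := by
    apply le_antisymm
    · rw [Submodule.span_le]
      rintro v ⟨k, c, rfl⟩
      rw [aux_pow_single hS hB]
      show (Function.support fun n : ℕ => (lp.single 2 k c : lp (fun _ : ℕ => ℂ) 2) n).Finite
      apply (Set.finite_singleton k).subset
      intro n hn
      rw [Function.mem_support] at hn
      by_contra h
      exact hn (lp.single_apply_ne (E := fun _ : ℕ => ℂ) 2 k c (by simpa using h))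
    · intro f hf
      have hf' : (Function.support fun n : ℕ => f n).Finite := hf
      rw [aux_sum_single f hf']
      exact Submodule.sum_mem _ fun n _ => Submodule.subset_span (hgen n (f n))
  have hsetEq : (Submodule.span ℂ
      {v : lp (fun _ : ℕ => ℂ) 2 | ∃ (k : ℕ) (c : ℂ), v = (S ^ k) (B c)} :
        Set (lp (fun _ : ℕ => ℂ) 2)) =
      {f : lp (fun _ : ℕ => ℂ) 2 | (Function.support fun n : ℕ => f n).Finite} := by
    rw [hspan]; rfl
  refine ⟨?_, hsetEq, ?_, ?_⟩
  · intro x n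
    rw [aux_adjB hB, aux_adjS_pow hS, Nat.zero_add]
  · intro f
    have h := lp.hasSum_single (E := fun _ : ℕ => ℂ) (p := 2) ENNReal.ofNat_ne_top f
    refine mem_closure_of_tendsto h (Filter.Eventually.of_forall fun s => ?_)
    exact Submodule.sum_mem _ fun i _ => Submodule.subset_span (hgen i (f i))
  · intro hU
    set g : lp (fun _ : ℕ => ℂ) 2 := ⟨fun n : ℕ => ((1:ℂ)/2) ^ n, aux_mem⟩ with hg
    have hgmem : g ∈ {f : lp (fun _ : ℕ => ℂ) 2 |
        (Function.support fun n : ℕ => f n).Finite} := by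
      rw [← hsetEq, hU]; exact Set.mem_univ _
    have hsupp : (Function.support fun n : ℕ => g n) = Set.univ := by
      ext n
      simp only [Function.mem_support, Set.mem_univ, iff_true]
      show ((1:ℂ)/2) ^ n ≠ 0
      exact pow_ne_zero n (by norm_num)
    simp only [Set.mem_setOf_eq] at hgmem
    rw [hsupp] at hgmem
    exact Set.infinite_univ hgmem
end

section
/- Let (A, B) be an input pair of bounded Hilbert space operators such that the adjoint controllability operator W_c* has dense domain and its adjoint W_c (the controllability operator) is everywhere defined and surjective. Then (A, B) is approximately controllable, i.e., span{Im Aᵏ B : k ≥ 0} is dense in X. (Key step: each W_c u is a weak limit of finite sums Σ_{k=-K}^{-1} A^{-k-1} B u(k), and since weak and norm closures of a subspace coincide, Im W_c is contained in the norm closure of the reachability space.) -/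
open ContinuousLinearMap

/-- Suppose the adjoint controllability operator `W_c*` of the input pair `(A,B)` is
everywhere defined (hence a bounded operator `Wcs : X → ℓ²(ℕ,U)`, indexing `ℤ₋` by
`n = -j-1 ∈ ℕ`, so `Wcs x = (B* A*ⁿ x)ₙ`) and its adjoint `W_c = Wcs*` is surjective.
Then `(A,B)` is approximately controllable: `span{Im AᵏB : k ≥ 0}` is dense in `X`. -/
theorem stmt14
    {X U : Type*}
    [NormedAddCommGroup X] [InnerProductSpace ℂ X] [CompleteSpace X]
    [NormedAddCommGroup U] [InnerProductSpace ℂ U] [CompleteSpace U]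
    (A : X →L[ℂ] X) (B : U →L[ℂ] X)
    (Wcs : X →L[ℂ] lp (fun _ : ℕ => U) 2)
    (hWcs : ∀ (x : X) (n : ℕ), Wcs x n = (adjoint B) (((adjoint A) ^ n) x))
    (hsurj : Function.Surjective (adjoint Wcs)) :
    Dense (Submodule.span ℂ {v : X | ∃ (k : ℕ) (u : U), v = (A ^ k) (B u)} : Set X) := by
  rw [Submodule.dense_iff_topologicalClosure_eq_top,
    Submodule.topologicalClosure_eq_top_iff]
  rw [Submodule.eq_bot_iff]
  intro x hx
  -- x is orthogonal to all generators
  have hgen : ∀ (k : ℕ) (u : U), inner ℂ ((A ^ k) (B u)) x = (0 : ℂ) := by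
    intro k u
    exact hx _ (Submodule.subset_span ⟨k, u, rfl⟩)
  -- hence B* A*^k x = 0 for all k
  have hzero : ∀ n : ℕ, (adjoint B) (((adjoint A) ^ n) x) = 0 := by
    intro n
    have h : ∀ u : U, inner ℂ u ((adjoint B) (((adjoint A) ^ n) x)) = (0 : ℂ) := by
      intro u
      have hpow : (adjoint A) ^ n = adjoint (A ^ n) := by
        induction n with
        | zero => simp [ContinuousLinearMap.one_def, adjoint_id]
        | succ m ih =>
          rw [pow_succ', pow_succ, ContinuousLinearMap.mul_def (A ^ m) A,
            adjoint_comp, ← ih]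
          rfl
      rw [adjoint_inner_right, hpow, adjoint_inner_right]
      exact hgen n u
    have := h ((adjoint B) (((adjoint A) ^ n) x))
    rwa [inner_self_eq_zero] at this
  -- hence Wcs x = 0
  have hW : Wcs x = 0 := by
    apply lp.ext
    funext n
    rw [hWcs x n, hzero n]; simp
  -- surjectivity of adjoint Wcs gives x = 0
  obtain ⟨y, hy⟩ := hsurj x
  have : (inner ℂ x x : ℂ) = 0 := by
    calc (inner ℂ x x : ℂ) = inner ℂ ((adjoint Wcs) y) x := by rw [hy]
    _ = inner ℂ y (Wcs x) := adjoint_inner_left Wcs x y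
    _ = 0 := by rw [hW, inner_zero_right]
  rwa [inner_self_eq_zero] at this
end

section
/- Let Σ and Σ' be systems with bounded operators (A,B,C,D) on state space X and (A',B',C',D') on X', and suppose Γ : X → X' is a closed, densely defined, injective operator with dense range implementing a pseudo-similarity: D' = D, A D(Γ) ⊆ D(Γ), Γ A x = A' Γ x for x ∈ D(Γ), B U ⊆ D(Γ), Γ B = B', and C x = C' Γ x for x ∈ D(Γ). Then D' = D and C' A'ⁿ B' = C Aⁿ B for all n ≥ 0; hence the transfer functions F_Σ(z) = D + zC(I-zA)⁻¹B and F_{Σ'}(z) = D' + zC'(I-zA')⁻¹B' agree on a neighborhood of 0. -/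
open ContinuousLinearMap

section stmt16_aux
variable {X U Y : Type*}
    [NormedAddCommGroup X] [InnerProductSpace ℂ X] [CompleteSpace X]
    [NormedAddCommGroup U] [InnerProductSpace ℂ U]
    [NormedAddCommGroup Y] [InnerProductSpace ℂ Y]

lemma stmt16_aux (A : X →L[ℂ] X) (B : U →L[ℂ] X) (C : X →L[ℂ] Y)
    (z : ℂ) (hz : ‖z • A‖ < 1) (G : X →L[ℂ] X)
    (hG : (1 - z • A) ∘L G = 1) (u : U) :
    C (G (B u)) = ∑' n : ℕ, z ^ n • C ((A ^ n) (B u)) := by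
  have hGE : G = ∑' n : ℕ, (z • A) ^ n := by
    have := left_inv_eq_right_inv (Units.oneSub (z • A) hz).inv_val hG
    simpa [Units.oneSub] using this.symm
  have hsum : Summable fun n : ℕ => (z • A) ^ n :=
    summable_geometric_of_norm_lt_one hz
  have happly : G (B u) = ∑' n : ℕ, ((z • A) ^ n) (B u) := by
    rw [hGE]
    exact (ContinuousLinearMap.apply ℂ X (B u)).map_tsum hsum
  have hsum2 : Summable fun n : ℕ => ((z • A) ^ n) (B u) :=
    hsum.map (ContinuousLinearMap.apply ℂ X (B u)) (by continuity)
  rw [happly, C.map_tsum hsum2]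
  refine tsum_congr fun n => ?_
  rw [smul_pow]
  simp

end stmt16_aux

/-- If `Γ` is a closed, densely defined, injective operator with dense range implementing a
pseudo-similarity between the systems `(A,B,C,D)` and `(A',B',C',D')`, then `D' = D` and
`C'A'ⁿB' = CAⁿB` for all `n ≥ 0`; hence the transfer functions
`F(z) = D + zC(I-zA)⁻¹B` and `F'(z) = D' + zC'(I-zA')⁻¹B'` agree on a neighborhood of `0`. -/
theorem stmt16
    {X X' U Y : Type*}
    [NormedAddCommGroup X] [InnerProductSpace ℂ X] [CompleteSpace X]
    [NormedAddCommGroup X'] [InnerProductSpace ℂ X'] [CompleteSpace X']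
    [NormedAddCommGroup U] [InnerProductSpace ℂ U] [CompleteSpace U]
    [NormedAddCommGroup Y] [InnerProductSpace ℂ Y] [CompleteSpace Y]
    (A : X →L[ℂ] X) (B : U →L[ℂ] X) (C : X →L[ℂ] Y) (D : U →L[ℂ] Y)
    (A' : X' →L[ℂ] X') (B' : U →L[ℂ] X') (C' : X' →L[ℂ] Y) (D' : U →L[ℂ] Y)
    (Γ : X →ₗ.[ℂ] X')
    (hdom : Dense (Γ.domain : Set X))
    (hran : Dense (Set.range Γ.toFun : Set X'))
    (hinj : ∀ x : Γ.domain, Γ x = 0 → (x : X) = 0)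
    (hclosed : IsClosed (Γ.graph : Set (X × X')))
    (hD : D' = D)
    (hA : ∀ x : Γ.domain, ∃ h : A (x : X) ∈ Γ.domain, Γ ⟨A (x : X), h⟩ = A' (Γ x))
    (hB : ∀ u : U, ∃ h : B u ∈ Γ.domain, Γ ⟨B u, h⟩ = B' u)
    (hC : ∀ x : Γ.domain, C (x : X) = C' (Γ x)) :
    D' = D ∧
    (∀ (n : ℕ) (u : U), C' ((A' ^ n) (B' u)) = C ((A ^ n) (B u))) ∧
    (∃ r : ℝ, 0 < r ∧ ∀ z : ℂ, ‖z‖ < r →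
      ∀ (G : X →L[ℂ] X) (G' : X' →L[ℂ] X'),
        ((1 - z • A) ∘L G = 1 ∧ G ∘L (1 - z • A) = 1) →
        ((1 - z • A') ∘L G' = 1 ∧ G' ∘L (1 - z • A') = 1) →
        ∀ u : U, D u + z • C (G (B u)) = D' u + z • C' (G' (B' u))) := by
  -- key: `AⁿBu` lies in the domain of `Γ` and `Γ(AⁿBu) = A'ⁿB'u`
  have key : ∀ (n : ℕ) (u : U),
      ∃ h : (A ^ n) (B u) ∈ Γ.domain, Γ ⟨(A ^ n) (B u), h⟩ = (A' ^ n) (B' u) := by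
    intro n u
    induction n with
    | zero => simpa using hB u
    | succ n ih =>
      obtain ⟨hmem, heq⟩ := ih
      obtain ⟨hmem', heq'⟩ := hA ⟨(A ^ n) (B u), hmem⟩
      refine ⟨by simpa [pow_succ'] using hmem', ?_⟩
      have h1 : (A ^ (n + 1)) (B u) = A ((A ^ n) (B u)) := by
        rw [pow_succ']; rfl
      have h2 : (A' ^ (n + 1)) (B' u) = A' ((A' ^ n) (B' u)) := by
        rw [pow_succ']; rfl
      rw [h2, ← heq, ← heq']
      congr 1
      exact Subtype.ext h1
  have hCn : ∀ (n : ℕ) (u : U), C' ((A' ^ n) (B' u)) = C ((A ^ n) (B u)) := by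
    intro n u
    obtain ⟨hmem, heq⟩ := key n u
    rw [← heq, ← hC ⟨(A ^ n) (B u), hmem⟩]
  refine ⟨hD, hCn, ?_⟩
  refine ⟨(1 + max ‖A‖ ‖A'‖)⁻¹, by positivity, ?_⟩
  intro z hz G G' hG hG' u
  have hzA : ‖z • A‖ < 1 := by
    calc ‖z • A‖ ≤ ‖z‖ * ‖A‖ := norm_smul_le _ _
      _ < (1 + max ‖A‖ ‖A'‖)⁻¹ * (1 + max ‖A‖ ‖A'‖) := by
          apply mul_lt_mul' (le_of_lt hz) _ (norm_nonneg A) (by positivity)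
          have : ‖A‖ ≤ max ‖A‖ ‖A'‖ := le_max_left _ _
          linarith
      _ = 1 := by
          rw [inv_mul_cancel₀]
          positivity
  have hzA' : ‖z • A'‖ < 1 := by
    calc ‖z • A'‖ ≤ ‖z‖ * ‖A'‖ := norm_smul_le _ _
      _ < (1 + max ‖A‖ ‖A'‖)⁻¹ * (1 + max ‖A‖ ‖A'‖) := by
          apply mul_lt_mul' (le_of_lt hz) _ (norm_nonneg A') (by positivity)
          have : ‖A'‖ ≤ max ‖A‖ ‖A'‖ := le_max_right _ _
          linarith
      _ = 1 := by
          rw [inv_mul_cancel₀]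
          positivity
  rw [hD, stmt16_aux A B C z hzA G hG.1 u, stmt16_aux A' B' C' z hzA' G' hG'.1 u]
  congr 2
  exact tsum_congr fun n => by rw [hCn n u]
end

section
/- Let Σ ~ (A,B,C,D) and Σ' ~ (A',B',C',D') be systems with C' A'ⁿ B' = C Aⁿ B for all n ≥ 0 and D = D'. Suppose (C', A') is observable (∩ₙ ker(C' A'ⁿ) = {0}). Then the map Γ₀ sending Σ_{k=0}^{n} Aᵏ B u_k ↦ Σ_{k=0}^{n} A'ᵏ B' u_k is well defined on the reachability space Rea(A|B) = span{Aᵏ B u : k ≥ 0, u ∈ U}; i.e., if Σ_{k=0}^{n} Aᵏ B u_k = 0 then Σ_{k=0}^{n} A'ᵏ B' u_k = 0. If moreover (C, A) is observable, then Γ₀ is injective. -/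
/-- Suppose `C'A'ⁿB' = CAⁿB` for all `n ≥ 0` and `D = D'`, and `(C',A')` is observable.
Then the map `Γ₀ : Σₖ AᵏBuₖ ↦ Σₖ A'ᵏB'uₖ` is well defined on the reachability space:
`Σₖ AᵏBuₖ = 0` implies `Σₖ A'ᵏB'uₖ = 0`. If moreover `(C,A)` is observable, then `Γ₀`
is injective: `Σₖ A'ᵏB'uₖ = 0` implies `Σₖ AᵏBuₖ = 0`. -/
theorem stmt17
    {X X' U Y : Type*}
    [NormedAddCommGroup X] [InnerProductSpace ℂ X] [CompleteSpace X]
    [NormedAddCommGroup X'] [InnerProductSpace ℂ X'] [CompleteSpace X']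
    [NormedAddCommGroup U] [InnerProductSpace ℂ U] [CompleteSpace U]
    [NormedAddCommGroup Y] [InnerProductSpace ℂ Y] [CompleteSpace Y]
    (A : X →L[ℂ] X) (B : U →L[ℂ] X) (C : X →L[ℂ] Y) (D : U →L[ℂ] Y)
    (A' : X' →L[ℂ] X') (B' : U →L[ℂ] X') (C' : X' →L[ℂ] Y) (D' : U →L[ℂ] Y)
    (hD : D = D')
    (hmom : ∀ (n : ℕ) (u : U), C' ((A' ^ n) (B' u)) = C ((A ^ n) (B u)))
    (hobs' : ∀ x' : X', (∀ n : ℕ, C' ((A' ^ n) x') = 0) → x' = 0) :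
    (∀ u : ℕ →₀ U,
      (∑ k ∈ u.support, (A ^ k) (B (u k))) = 0 →
        (∑ k ∈ u.support, (A' ^ k) (B' (u k))) = 0) ∧
    ((∀ x : X, (∀ n : ℕ, C ((A ^ n) x) = 0) → x = 0) →
      ∀ u : ℕ →₀ U,
        (∑ k ∈ u.support, (A' ^ k) (B' (u k))) = 0 →
          (∑ k ∈ u.support, (A ^ k) (B (u k))) = 0) := by
  constructor
  · intro u h
    apply hobs'
    intro n
    have : C ((A ^ n) (∑ k ∈ u.support, (A ^ k) (B (u k)))) = 0 := by
      rw [h]; simp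
    calc C' ((A' ^ n) (∑ k ∈ u.support, (A' ^ k) (B' (u k))))
        = ∑ k ∈ u.support, C' ((A' ^ (n + k)) (B' (u k))) := by
          rw [map_sum, map_sum]
          refine Finset.sum_congr rfl fun k _ => ?_
          rw [pow_add, ContinuousLinearMap.mul_apply]
      _ = ∑ k ∈ u.support, C ((A ^ (n + k)) (B (u k))) := by
          exact Finset.sum_congr rfl fun k _ => hmom _ _
      _ = C ((A ^ n) (∑ k ∈ u.support, (A ^ k) (B (u k)))) := by
          rw [map_sum, map_sum]
          refine Finset.sum_congr rfl fun k _ => ?_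
          rw [pow_add, ContinuousLinearMap.mul_apply]
      _ = 0 := this
  · intro hobs u h
    apply hobs
    intro n
    have : C' ((A' ^ n) (∑ k ∈ u.support, (A' ^ k) (B' (u k)))) = 0 := by
      rw [h]; simp
    calc C ((A ^ n) (∑ k ∈ u.support, (A ^ k) (B (u k))))
        = ∑ k ∈ u.support, C ((A ^ (n + k)) (B (u k))) := by
          rw [map_sum, map_sum]
          refine Finset.sum_congr rfl fun k _ => ?_
          rw [pow_add, ContinuousLinearMap.mul_apply]
      _ = ∑ k ∈ u.support, C' ((A' ^ (n + k)) (B' (u k))) := by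
          exact Finset.sum_congr rfl fun k _ => (hmom _ _).symm
      _ = C' ((A' ^ n) (∑ k ∈ u.support, (A' ^ k) (B' (u k)))) := by
          rw [map_sum, map_sum]
          refine Finset.sum_congr rfl fun k _ => ?_
          rw [pow_add, ContinuousLinearMap.mul_apply]
      _ = 0 := this
end
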